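/- Σ₁(0) = {(x₁, x₂) ∈ ℝ² : |x₁| ≤ q + r, |x₂| ≤ p + r, |x₁ − x₂| ≤ p + q}; this set is the convex hull of the six lattice points ±(q+r, p+r), ±(q+r, −p+r), ±(−q+r, p+r), it contains the standard basis vectors (1,0) and (0,1), and it is integral; consequently Σ_ℓ(0) = ℓ·Σ₁(0) is integral for every positive integer ℓ. -/

import Mathlib

open scoped BigOperators Pointwise

namespace NFC

/-- The coordinatewise embedding of the lattice `ℤ²` into `ℝ²`. -/
def iota {g : ℕ} (x : Fin g → ℤ) : Fin g → ℝ := fun i => (x i : ℝ)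

/-- A subset `Δ ⊆ ℝ^g` is integral: a bounded convex polytope equal to the convex hull
of `Δ ∩ ℤ^g`, symmetric about `0`, containing `0`, with `Δ ∩ ℤ^g` containing a ℤ-basis. -/
def IsIntegral {g : ℕ} (Δ : Set (Fin g → ℝ)) : Prop :=
  Bornology.IsBounded Δ ∧
  Δ = convexHull ℝ (Δ ∩ Set.range (iota (g := g))) ∧
  Δ = -Δ ∧ (0 : Fin g → ℝ) ∈ Δ ∧
  ∃ b : Module.Basis (Fin g) ℤ (Fin g → ℤ), ∀ i, iota (b i) ∈ Δ

/-- `φ(u₁, u₂) = ((q+r)u₁ + r·u₂, r·u₁ + (p+r)u₂)`, the adjugate of the Gram matrix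
`[[p+r, −r], [−r, q+r]]` applied to `u`. -/
def phiPQR (p q r : ℤ) (u : Fin 2 → ℤ) : Fin 2 → ℤ :=
  ![(q + r) * u 0 + r * u 1, r * u 0 + (p + r) * u 1]

/-- The standard pairing `u(x) = u₁x₁ + u₂x₂` on `ℤ² × ℤ²`. -/
def dotZ (u x : Fin 2 → ℤ) : ℤ := u 0 * x 0 + u 1 * x 1

/-- The ℝ-linear extension of `u ∈ X^∨ = ℤ²` applied to `x ∈ ℝ²`. -/
noncomputable def dotR (u : Fin 2 → ℤ) (x : Fin 2 → ℝ) : ℝ :=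
  (u 0 : ℝ) * x 0 + (u 1 : ℝ) * x 1

/-- `E(u) = u(φ(u))`. -/
def EPQR (p q r : ℤ) (u : Fin 2 → ℤ) : ℤ := dotZ u (phiPQR p q r u)

/-- The Voronoi polytope `Σ_ℓ(0) = {x ∈ ℝ² : ℓ·E(u) + u(x) ≥ 0 for all u ∈ X^∨}`. -/
def SigPQR (p q r : ℤ) (ℓ : ℕ) : Set (Fin 2 → ℝ) :=
  {x | ∀ u : Fin 2 → ℤ, 0 ≤ ((ℓ : ℤ) * EPQR p q r u : ℤ) + dotR u x}

lemma EPQR_eq (p q r : ℤ) (u : Fin 2 → ℤ) :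
    EPQR p q r u = q * (u 0)^2 + p * (u 1)^2 + r * (u 0 + u 1)^2 := by
  simp only [EPQR, dotZ, phiPQR, Matrix.cons_val_zero, Matrix.cons_val_one, Matrix.head_cons]
  ring

lemma EPQR_neg (p q r : ℤ) (u : Fin 2 → ℤ) : EPQR p q r (-u) = EPQR p q r u := by
  simp only [EPQR_eq, Pi.neg_apply]; ring

lemma EPQR_nonneg {p q r : ℤ} (hp : 0 < p) (hq : 0 < q) (hr : 0 ≤ r) (u : Fin 2 → ℤ) :
    0 ≤ EPQR p q r u := by
  rw [EPQR_eq]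
  have h1 := sq_nonneg (u 0); have h2 := sq_nonneg (u 1); have h3 := sq_nonneg (u 0 + u 1)
  nlinarith

lemma key (p q r L : ℤ) (hp : 0 < p) (hq : 0 < q) (hr : 0 ≤ r) (hL : 0 ≤ L)
    (a b : ℤ) (x0 x1 : ℝ)
    (h0 : |x0| ≤ ((L*(q+r) : ℤ) : ℝ)) (h1 : |x1| ≤ ((L*(p+r) : ℤ) : ℝ))
    (h2 : |x0 - x1| ≤ ((L*(p+q) : ℤ) : ℝ)) :
    0 ≤ ((L * (q*a^2 + p*b^2 + r*(a+b)^2) : ℤ) : ℝ) + a*x0 + b*x1 := by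
  rw [abs_le] at h0 h1 h2
  push_cast at h0 h1 h2 ⊢
  have hp' : (0:ℝ) < p := by exact_mod_cast hp
  have hq' : (0:ℝ) < q := by exact_mod_cast hq
  have hr' : (0:ℝ) ≤ r := by exact_mod_cast hr
  have hL' : (0:ℝ) ≤ L := by exact_mod_cast hL
  have I1 : (a:ℝ) ≤ (a:ℝ)^2 := by exact_mod_cast Int.le_self_sq a
  have I2 : -(a:ℝ) ≤ (a:ℝ)^2 := by
    have h : -a ≤ a^2 := by linarith [Int.le_self_sq (-a)]
    exact_mod_cast h
  have I3 : (b:ℝ) ≤ (b:ℝ)^2 := by exact_mod_cast Int.le_self_sq b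
  have I4 : -(b:ℝ) ≤ (b:ℝ)^2 := by
    have h : -b ≤ b^2 := by linarith [Int.le_self_sq (-b)]
    exact_mod_cast h
  have I5 : (a:ℝ)+(b:ℝ) ≤ ((a:ℝ)+(b:ℝ))^2 := by
    have h : a + b ≤ (a+b)^2 := Int.le_self_sq (a+b)
    have h' : ((a:ℝ))+b ≤ (((a:ℝ))+b)^2 := by exact_mod_cast h
    linarith
  have I6 : -((a:ℝ)+(b:ℝ)) ≤ ((a:ℝ)+(b:ℝ))^2 := by
    have h : -(a + b) ≤ (a+b)^2 := by linarith [Int.le_self_sq (-(a+b))]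
    have h' : -(((a:ℝ))+b) ≤ (((a:ℝ))+b)^2 := by exact_mod_cast h
    linarith
  have P1 : 0 ≤ (L:ℝ)*(q*((a:ℝ)^2 - a)) := by
    apply mul_nonneg hL'; apply mul_nonneg hq'.le; linarith
  have P1' : 0 ≤ (L:ℝ)*(q*((a:ℝ)^2 + a)) := by
    apply mul_nonneg hL'; apply mul_nonneg hq'.le; linarith
  have P2 : 0 ≤ (L:ℝ)*(p*((b:ℝ)^2 - b)) := by
    apply mul_nonneg hL'; apply mul_nonneg hp'.le; linarith
  have P2' : 0 ≤ (L:ℝ)*(p*((b:ℝ)^2 + b)) := by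
    apply mul_nonneg hL'; apply mul_nonneg hp'.le; linarith
  have P3 : 0 ≤ (L:ℝ)*(r*(((a:ℝ)+b)^2 - (a+b))) := by
    apply mul_nonneg hL'; apply mul_nonneg hr'; linarith
  have P3' : 0 ≤ (L:ℝ)*(r*(((a:ℝ)+b)^2 + (a+b))) := by
    apply mul_nonneg hL'; apply mul_nonneg hr'; linarith
  rcases le_or_gt 0 a with ha | ha <;> rcases le_or_gt 0 b with hb | hb
  · -- a ≥ 0, b ≥ 0
    have ha' : (0:ℝ) ≤ a := by exact_mod_cast ha
    have hb' : (0:ℝ) ≤ b := by exact_mod_cast hb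
    have t1 := mul_le_mul_of_nonneg_left h0.1 ha'
    have t2 := mul_le_mul_of_nonneg_left h1.1 hb'
    linarith [P1, P2, P3, t1, t2]
  · -- a ≥ 0, b < 0
    have ha' : (0:ℝ) ≤ a := by exact_mod_cast ha
    have hb' : (b:ℝ) ≤ 0 := by exact_mod_cast hb.le
    rcases le_or_gt 0 (a + b) with hab | hab
    · have hab' : (0:ℝ) ≤ (a:ℝ) + b := by exact_mod_cast hab
      have t1 := mul_le_mul_of_nonneg_left h0.1 hab'
      have t2 := mul_le_mul_of_nonpos_left (show x1 - x0 ≤ (L:ℝ)*(p+q) by linarith) hb'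
      linarith [P1, P2', P3, t1, t2]
    · have hab' : (a:ℝ) + b ≤ 0 := by exact_mod_cast hab.le
      have t1 := mul_le_mul_of_nonneg_left h2.1 ha'
      have t2 := mul_le_mul_of_nonpos_left h1.2 hab'
      linarith [P1, P2', P3', t1, t2]
  · -- a < 0, b ≥ 0
    have ha' : (a:ℝ) ≤ 0 := by exact_mod_cast ha.le
    have hb' : (0:ℝ) ≤ b := by exact_mod_cast hb
    rcases le_or_gt 0 (a + b) with hab | hab
    · have hab' : (0:ℝ) ≤ (a:ℝ) + b := by exact_mod_cast hab
      have t1 := mul_le_mul_of_nonpos_left h2.2 ha'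
      have t2 := mul_le_mul_of_nonneg_left h1.1 hab'
      linarith [P1', P2, P3, t1, t2]
    · have hab' : (a:ℝ) + b ≤ 0 := by exact_mod_cast hab.le
      have t1 := mul_le_mul_of_nonpos_left h0.2 hab'
      have t2 := mul_le_mul_of_nonneg_left (show -((L:ℝ)*(p+q)) ≤ x1 - x0 by linarith) hb'
      linarith [P1', P2, P3', t1, t2]
  · -- a < 0, b < 0
    have ha' : (a:ℝ) ≤ 0 := by exact_mod_cast ha.le
    have hb' : (b:ℝ) ≤ 0 := by exact_mod_cast hb.le
    have t1 := mul_le_mul_of_nonpos_left h0.2 ha'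
    have t2 := mul_le_mul_of_nonpos_left h1.2 hb'
    linarith [P1', P2', P3', t1, t2]

lemma sig_eq_hex (p q r : ℤ) (hp : 0 < p) (hq : 0 < q) (hr : 0 ≤ r) (ℓ : ℕ) :
    SigPQR p q r ℓ = {x : Fin 2 → ℝ |
      |x 0| ≤ (((ℓ:ℤ)*(q+r) : ℤ) : ℝ) ∧ |x 1| ≤ (((ℓ:ℤ)*(p+r) : ℤ) : ℝ) ∧
      |x 0 - x 1| ≤ (((ℓ:ℤ)*(p+q) : ℤ) : ℝ)} := by
  ext x
  constructor
  · intro hx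
    have e1 := hx ![1, 0]
    have e2 := hx ![-1, 0]
    have e3 := hx ![0, 1]
    have e4 := hx ![0, -1]
    have e5 := hx ![1, -1]
    have e6 := hx ![-1, 1]
    simp only [EPQR_eq, dotR, Matrix.cons_val_zero, Matrix.cons_val_one,
      Matrix.head_cons] at e1 e2 e3 e4 e5 e6
    push_cast at e1 e2 e3 e4 e5 e6
    refine ⟨?_, ?_, ?_⟩ <;> rw [abs_le] <;> push_cast <;> constructor <;> linarith
  · rintro ⟨h0, h1, h2⟩
    intro u
    have := key p q r ℓ hp hq hr (Int.natCast_nonneg ℓ) (u 0) (u 1) (x 0) (x 1) h0 h1 h2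
    rw [EPQR_eq]
    unfold dotR
    push_cast at this ⊢
    linarith

lemma sig_convex (p q r : ℤ) (ℓ : ℕ) : Convex ℝ (SigPQR p q r ℓ) := by
  intro x hx y hy α β hα hβ hαβ
  intro u
  have h1 := hx u
  have h2 := hy u
  have e : dotR u (α • x + β • y) = α * dotR u x + β * dotR u y := by
    simp only [dotR, Pi.add_apply, Pi.smul_apply, smul_eq_mul]; ring
  rw [e]
  have h3 : α * (((ℓ:ℤ) * EPQR p q r u : ℤ) + dotR u x)
      + β * (((ℓ:ℤ) * EPQR p q r u : ℤ) + dotR u y)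
      = (α + β) * ((ℓ:ℤ) * EPQR p q r u : ℤ) + (α * dotR u x + β * dotR u y) := by ring
  rw [hαβ, one_mul] at h3
  linarith [mul_nonneg hα h1, mul_nonneg hβ h2, h3.le, h3.ge]

lemma seg_mem {a b x : Fin 2 → ℝ} (t : ℝ) (ht0 : 0 ≤ t) (ht1 : t ≤ 1)
    (e0 : x 0 = (1 - t) * a 0 + t * b 0) (e1 : x 1 = (1 - t) * a 1 + t * b 1) :
    x ∈ segment ℝ a b := by
  refine ⟨1 - t, t, by linarith, ht0, by ring, ?_⟩
  funext i
  fin_cases i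
  · show (1 - t) * a 0 + t * b 0 = x 0; exact e0.symm
  · show (1 - t) * a 1 + t * b 1 = x 1; exact e1.symm

set_option maxHeartbeats 1000000 in
lemma sig_eq_hull (p q r : ℤ) (hp : 0 < p) (hq : 0 < q) (hr : 0 ≤ r) (ℓ : ℕ) (hl : 0 < ℓ) :
    SigPQR p q r ℓ = convexHull ℝ
      ({iota ![(ℓ:ℤ)*(q+r), (ℓ:ℤ)*(p+r)], iota ![-((ℓ:ℤ)*(q+r)), -((ℓ:ℤ)*(p+r))],
        iota ![(ℓ:ℤ)*(q+r), (ℓ:ℤ)*(-p+r)], iota ![-((ℓ:ℤ)*(q+r)), (ℓ:ℤ)*(p-r)],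
        iota ![(ℓ:ℤ)*(-q+r), (ℓ:ℤ)*(p+r)], iota ![(ℓ:ℤ)*(q-r), -((ℓ:ℤ)*(p+r))]} :
        Set (Fin 2 → ℝ)) := by
  have hp' : (0:ℝ) < p := by exact_mod_cast hp
  have hq' : (0:ℝ) < q := by exact_mod_cast hq
  have hr' : (0:ℝ) ≤ r := by exact_mod_cast hr
  have hl' : (0:ℝ) < ℓ := by exact_mod_cast hl
  have hLp : (0:ℝ) ≤ (ℓ:ℝ) * p := le_of_lt (mul_pos hl' hp')
  have hLq : (0:ℝ) ≤ (ℓ:ℝ) * q := le_of_lt (mul_pos hl' hq')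
  have hLr : (0:ℝ) ≤ (ℓ:ℝ) * r := mul_nonneg hl'.le hr'
  set S : Set (Fin 2 → ℝ) :=
      {iota ![(ℓ:ℤ)*(q+r), (ℓ:ℤ)*(p+r)], iota ![-((ℓ:ℤ)*(q+r)), -((ℓ:ℤ)*(p+r))],
       iota ![(ℓ:ℤ)*(q+r), (ℓ:ℤ)*(-p+r)], iota ![-((ℓ:ℤ)*(q+r)), (ℓ:ℤ)*(p-r)],
       iota ![(ℓ:ℤ)*(-q+r), (ℓ:ℤ)*(p+r)], iota ![(ℓ:ℤ)*(q-r), -((ℓ:ℤ)*(p+r))]}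
    with hSdef
  have m1 : iota ![(ℓ:ℤ)*(q+r), (ℓ:ℤ)*(p+r)] ∈ S := by rw [hSdef]; left; rfl
  have m2 : iota ![-((ℓ:ℤ)*(q+r)), -((ℓ:ℤ)*(p+r))] ∈ S := by
    rw [hSdef]; right; left; rfl
  have m3 : iota ![(ℓ:ℤ)*(q+r), (ℓ:ℤ)*(-p+r)] ∈ S := by
    rw [hSdef]; right; right; left; rfl
  have m4 : iota ![-((ℓ:ℤ)*(q+r)), (ℓ:ℤ)*(p-r)] ∈ S := by
    rw [hSdef]; right; right; right; left; rfl
  have m5 : iota ![(ℓ:ℤ)*(-q+r), (ℓ:ℤ)*(p+r)] ∈ S := by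
    rw [hSdef]; right; right; right; right; left; rfl
  have m6 : iota ![(ℓ:ℤ)*(q-r), -((ℓ:ℤ)*(p+r))] ∈ S := by
    rw [hSdef]; right; right; right; right; right; rfl
  apply Set.Subset.antisymm
  · intro x hx
    rw [sig_eq_hex p q r hp hq hr ℓ] at hx
    obtain ⟨h0, h1, h2⟩ := hx
    rw [abs_le] at h0 h1 h2
    push_cast at h0 h1 h2
    have hR : ∃ R : Fin 2 → ℝ, R ∈ convexHull ℝ S ∧ R 1 = x 1 ∧ x 0 ≤ R 0 := by
      rcases le_or_gt ((ℓ:ℝ)*((r:ℝ) - p)) (x 1) with hc | hc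
      · refine ⟨![(ℓ:ℝ)*((q:ℝ)+r), x 1], ?_, rfl, ?_⟩
        · have hden : (0:ℝ) < 2*((ℓ:ℝ)*p) := by linarith [mul_pos hl' hp']
          apply (convex_convexHull ℝ S).segment_subset
            (subset_convexHull ℝ S m3) (subset_convexHull ℝ S m1)
          refine seg_mem ((x 1 - (ℓ:ℝ)*((r:ℝ)-p)) / (2*((ℓ:ℝ)*p)))
            (div_nonneg (by linarith) hden.le) ?_ ?_ ?_
          · rw [div_le_one hden]; nlinarith [h1.2]
          · show (ℓ:ℝ)*((q:ℝ)+r) = _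
            simp only [iota, Matrix.cons_val_zero, Matrix.cons_val_one, Matrix.head_cons]
            push_cast; ring
          · show x 1 = _
            simp only [iota, Matrix.cons_val_zero, Matrix.cons_val_one, Matrix.head_cons]
            push_cast
            field_simp
            ring
        · show x 0 ≤ (ℓ:ℝ)*((q:ℝ)+r)
          linarith [h0.2]
      · have hden : (0:ℝ) < 2*((ℓ:ℝ)*r) := by nlinarith [h1.1]
        refine ⟨![x 1 + (ℓ:ℝ)*((p:ℝ)+q), x 1], ?_, rfl, ?_⟩
        · apply (convex_convexHull ℝ S).segment_subset
            (subset_convexHull ℝ S m6) (subset_convexHull ℝ S m3)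
          refine seg_mem ((x 1 + (ℓ:ℝ)*((p:ℝ)+r)) / (2*((ℓ:ℝ)*r)))
            (div_nonneg (by linarith [h1.1]) hden.le) ?_ ?_ ?_
          · rw [div_le_one hden]; nlinarith [hc]
          · show x 1 + (ℓ:ℝ)*((p:ℝ)+q) = _
            simp only [iota, Matrix.cons_val_zero, Matrix.cons_val_one, Matrix.head_cons]
            push_cast
            have hr0 : (r:ℝ) ≠ 0 := by intro h; rw [h, mul_zero, mul_zero] at hden; exact lt_irrefl _ hden
            field_simp [hr0]
            ring
          · show x 1 = _
            simp only [iota, Matrix.cons_val_zero, Matrix.cons_val_one, Matrix.head_cons]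
            push_cast
            have hr0 : (r:ℝ) ≠ 0 := by intro h; rw [h, mul_zero, mul_zero] at hden; exact lt_irrefl _ hden
            field_simp [hr0]
            ring
        · show x 0 ≤ x 1 + (ℓ:ℝ)*((p:ℝ)+q)
          linarith [h2.2]
    have hLmem : ∃ Lw : Fin 2 → ℝ, Lw ∈ convexHull ℝ S ∧ Lw 1 = x 1 ∧ Lw 0 ≤ x 0 := by
      rcases le_or_gt (x 1) ((ℓ:ℝ)*((p:ℝ) - r)) with hc | hc
      · refine ⟨![-((ℓ:ℝ)*((q:ℝ)+r)), x 1], ?_, rfl, ?_⟩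
        · have hden : (0:ℝ) < 2*((ℓ:ℝ)*p) := by linarith [mul_pos hl' hp']
          apply (convex_convexHull ℝ S).segment_subset
            (subset_convexHull ℝ S m2) (subset_convexHull ℝ S m4)
          refine seg_mem ((x 1 + (ℓ:ℝ)*((p:ℝ)+r)) / (2*((ℓ:ℝ)*p)))
            (div_nonneg (by linarith [h1.1]) hden.le) ?_ ?_ ?_
          · rw [div_le_one hden]; nlinarith [hc]
          · show -((ℓ:ℝ)*((q:ℝ)+r)) = _
            simp only [iota, Matrix.cons_val_zero, Matrix.cons_val_one, Matrix.head_cons]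
            push_cast; ring
          · show x 1 = _
            simp only [iota, Matrix.cons_val_zero, Matrix.cons_val_one, Matrix.head_cons]
            push_cast
            field_simp
            ring
        · show -((ℓ:ℝ)*((q:ℝ)+r)) ≤ x 0
          linarith [h0.1]
      · have hden : (0:ℝ) < 2*((ℓ:ℝ)*r) := by nlinarith [h1.2]
        refine ⟨![x 1 - (ℓ:ℝ)*((p:ℝ)+q), x 1], ?_, rfl, ?_⟩
        · apply (convex_convexHull ℝ S).segment_subset
            (subset_convexHull ℝ S m4) (subset_convexHull ℝ S m5)
          refine seg_mem ((x 1 - (ℓ:ℝ)*((p:ℝ)-r)) / (2*((ℓ:ℝ)*r)))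
            (div_nonneg (by linarith [hc]) hden.le) ?_ ?_ ?_
          · rw [div_le_one hden]; nlinarith [h1.2]
          · show x 1 - (ℓ:ℝ)*((p:ℝ)+q) = _
            simp only [iota, Matrix.cons_val_zero, Matrix.cons_val_one, Matrix.head_cons]
            push_cast
            have hr0 : (r:ℝ) ≠ 0 := by intro h; rw [h, mul_zero, mul_zero] at hden; exact lt_irrefl _ hden
            field_simp [hr0]
            ring
          · show x 1 = _
            simp only [iota, Matrix.cons_val_zero, Matrix.cons_val_one, Matrix.head_cons]
            push_cast
            have hr0 : (r:ℝ) ≠ 0 := by intro h; rw [h, mul_zero, mul_zero] at hden; exact lt_irrefl _ hden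
            field_simp [hr0]
            ring
        · show x 1 - (ℓ:ℝ)*((p:ℝ)+q) ≤ x 0
          linarith [h2.1]
    obtain ⟨R, hRm, hR1, hRx⟩ := hR
    obtain ⟨Lw, hLm, hL1, hLx⟩ := hLmem
    by_cases heq : Lw 0 = R 0
    · have hx0 : x 0 = R 0 := le_antisymm hRx (heq ▸ hLx)
      have hxR : x = R := by
        funext i
        fin_cases i
        · show x 0 = R 0; exact hx0
        · show x 1 = R 1; exact hR1.symm
      rw [hxR]; exact hRm
    · have hlt : Lw 0 < R 0 := lt_of_le_of_ne (hLx.trans hRx) heq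
      have hden : (0:ℝ) < R 0 - Lw 0 := by linarith
      apply (convex_convexHull ℝ S).segment_subset hLm hRm
      refine seg_mem ((x 0 - Lw 0)/(R 0 - Lw 0))
        (div_nonneg (by linarith) hden.le) ?_ ?_ ?_
      · rw [div_le_one hden]; linarith
      · field_simp
        ring
      · rw [hL1, hR1]; ring
  · apply convexHull_min ?_ (sig_convex p q r ℓ)
    intro y hy
    rw [sig_eq_hex p q r hp hq hr ℓ]
    rw [hSdef] at hy
    simp only [Set.mem_insert_iff, Set.mem_singleton_iff] at hy
    rcases hy with rfl|rfl|rfl|rfl|rfl|rfl <;>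
      refine ⟨?_, ?_, ?_⟩ <;>
        simp only [iota, Matrix.cons_val_zero, Matrix.cons_val_one, Matrix.head_cons] <;>
          rw [abs_le] <;> push_cast <;> constructor <;> nlinarith [hLp, hLq, hLr]

lemma e0_mem (p q r : ℤ) (hp : 0 < p) (hq : 0 < q) (hr : 0 ≤ r) (ℓ : ℕ) (hl : 0 < ℓ) :
    iota ![1, 0] ∈ SigPQR p q r ℓ := by
  have hp1 : (1:ℝ) ≤ p := by exact_mod_cast hp
  have hq1 : (1:ℝ) ≤ q := by exact_mod_cast hq
  have hr' : (0:ℝ) ≤ r := by exact_mod_cast hr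
  have hl1 : (1:ℝ) ≤ ℓ := by exact_mod_cast hl
  rw [sig_eq_hex p q r hp hq hr ℓ]
  refine ⟨?_, ?_, ?_⟩ <;>
    simp only [iota, Matrix.cons_val_zero, Matrix.cons_val_one, Matrix.head_cons] <;>
      push_cast <;> rw [abs_le] <;> constructor <;> nlinarith [hp1, hq1, hr', hl1]

lemma e1_mem (p q r : ℤ) (hp : 0 < p) (hq : 0 < q) (hr : 0 ≤ r) (ℓ : ℕ) (hl : 0 < ℓ) :
    iota ![0, 1] ∈ SigPQR p q r ℓ := by
  have hp1 : (1:ℝ) ≤ p := by exact_mod_cast hp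
  have hq1 : (1:ℝ) ≤ q := by exact_mod_cast hq
  have hr' : (0:ℝ) ≤ r := by exact_mod_cast hr
  have hl1 : (1:ℝ) ≤ ℓ := by exact_mod_cast hl
  rw [sig_eq_hex p q r hp hq hr ℓ]
  refine ⟨?_, ?_, ?_⟩ <;>
    simp only [iota, Matrix.cons_val_zero, Matrix.cons_val_one, Matrix.head_cons] <;>
      push_cast <;> rw [abs_le] <;> constructor <;> nlinarith [hp1, hq1, hr', hl1]

lemma sig_neg (p q r : ℤ) (ℓ : ℕ) : SigPQR p q r ℓ = -SigPQR p q r ℓ := by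
  have hmem : ∀ y, y ∈ SigPQR p q r ℓ → -y ∈ SigPQR p q r ℓ := by
    intro y hy u
    have h := hy (-u)
    have e1 : EPQR p q r (-u) = EPQR p q r u := EPQR_neg p q r u
    have e2 : dotR (-u) y = dotR u (-y) := by
      simp only [dotR, Pi.neg_apply, Int.cast_neg]; ring
    rw [e1, e2] at h
    exact h
  ext x
  simp only [Set.mem_neg]
  exact ⟨fun h => hmem x h, fun h => by simpa using hmem (-x) h⟩

lemma sig_zero (p q r : ℤ) (hp : 0 < p) (hq : 0 < q) (hr : 0 ≤ r) (ℓ : ℕ) :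
    (0 : Fin 2 → ℝ) ∈ SigPQR p q r ℓ := by
  intro u
  have hE := EPQR_nonneg hp hq hr u
  simp only [dotR, Pi.zero_apply, mul_zero, add_zero]
  exact_mod_cast mul_nonneg (Int.natCast_nonneg ℓ) hE

lemma sig_bounded (p q r : ℤ) (hp : 0 < p) (hq : 0 < q) (hr : 0 ≤ r) (ℓ : ℕ) :
    Bornology.IsBounded (SigPQR p q r ℓ) := by
  rw [isBounded_iff_forall_norm_le]
  refine ⟨(ℓ:ℝ)*((q:ℝ)+r) + (ℓ:ℝ)*((p:ℝ)+r), ?_⟩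
  intro x hx
  rw [sig_eq_hex p q r hp hq hr ℓ] at hx
  obtain ⟨h0, h1, -⟩ := hx
  push_cast at h0 h1
  have k0 := abs_nonneg (x 0)
  have k1 := abs_nonneg (x 1)
  apply (pi_norm_le_iff_of_nonneg (by linarith)).mpr
  intro i
  fin_cases i
  · show ‖x 0‖ ≤ _
    rw [Real.norm_eq_abs]; linarith
  · show ‖x 1‖ ≤ _
    rw [Real.norm_eq_abs]; linarith

lemma sig_hull_inter (p q r : ℤ) (hp : 0 < p) (hq : 0 < q) (hr : 0 ≤ r) (ℓ : ℕ) (hl : 0 < ℓ) :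
    SigPQR p q r ℓ = convexHull ℝ (SigPQR p q r ℓ ∩ Set.range (iota (g := 2))) := by
  apply Set.Subset.antisymm
  · nth_rewrite 1 [sig_eq_hull p q r hp hq hr ℓ hl]
    apply convexHull_mono
    intro y hy
    refine ⟨?_, ?_⟩
    · rw [sig_eq_hull p q r hp hq hr ℓ hl]
      exact subset_convexHull ℝ _ hy
    · simp only [Set.mem_insert_iff, Set.mem_singleton_iff] at hy
      rcases hy with rfl|rfl|rfl|rfl|rfl|rfl <;> exact Set.mem_range_self _
  · exact convexHull_min Set.inter_subset_left (sig_convex p q r ℓ)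

lemma sig_one_subset (p q r : ℤ) (hp : 0 < p) (hq : 0 < q) (hr : 0 ≤ r) (ℓ : ℕ) (hl : 0 < ℓ) :
    SigPQR p q r 1 ⊆ SigPQR p q r ℓ := by
  intro x hx u
  have h := hx u
  have hE := EPQR_nonneg hp hq hr u
  have h1 : (1:ℤ) ≤ (ℓ:ℤ) := by exact_mod_cast hl
  have hle : (((1:ℕ):ℤ) * EPQR p q r u : ℤ) ≤ ((ℓ:ℤ) * EPQR p q r u) := by
    have : ((1:ℕ):ℤ) = 1 := rfl
    rw [this]
    exact mul_le_mul_of_nonneg_right h1 hE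
  have hle' : ((((1:ℕ):ℤ) * EPQR p q r u : ℤ) : ℝ) ≤ (((ℓ:ℤ) * EPQR p q r u : ℤ) : ℝ) := by
    exact_mod_cast hle
  linarith

lemma sig_basis (p q r : ℤ) (hp : 0 < p) (hq : 0 < q) (hr : 0 ≤ r) (ℓ : ℕ) (hl : 0 < ℓ) :
    ∃ b : Module.Basis (Fin 2) ℤ (Fin 2 → ℤ), ∀ i, iota (b i) ∈ SigPQR p q r ℓ := by
  refine ⟨Pi.basisFun ℤ (Fin 2), ?_⟩
  intro i
  fin_cases i
  · show iota ((Pi.basisFun ℤ (Fin 2)) 0) ∈ _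
    have e : (Pi.basisFun ℤ (Fin 2)) 0 = ![(1:ℤ), 0] := by
      funext j; fin_cases j <;> simp [Pi.basisFun_apply]
    rw [e]
    exact e0_mem p q r hp hq hr ℓ hl
  · show iota ((Pi.basisFun ℤ (Fin 2)) 1) ∈ _
    have e : (Pi.basisFun ℤ (Fin 2)) 1 = ![(0:ℤ), 1] := by
      funext j; fin_cases j <;> simp [Pi.basisFun_apply]
    rw [e]
    exact e1_mem p q r hp hq hr ℓ hl

lemma sig_isIntegral (p q r : ℤ) (hp : 0 < p) (hq : 0 < q) (hr : 0 ≤ r) (ℓ : ℕ) (hl : 0 < ℓ) :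
    IsIntegral (SigPQR p q r ℓ) :=
  ⟨sig_bounded p q r hp hq hr ℓ, sig_hull_inter p q r hp hq hr ℓ hl,
   sig_neg p q r ℓ, sig_zero p q r hp hq hr ℓ, sig_basis p q r hp hq hr ℓ hl⟩

lemma sig_smul (p q r : ℤ) (ℓ : ℕ) (hl : 0 < ℓ) :
    SigPQR p q r ℓ = (ℓ : ℝ) • SigPQR p q r 1 := by
  have hl' : (0:ℝ) < ℓ := by exact_mod_cast hl
  have hc : ((ℓ:ℝ)) ≠ 0 := ne_of_gt hl'
  ext x
  rw [Set.mem_smul_set_iff_inv_smul_mem₀ hc]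
  have e : ∀ u : Fin 2 → ℤ, dotR u ((ℓ:ℝ)⁻¹ • x) = (ℓ:ℝ)⁻¹ * dotR u x := by
    intro u
    simp only [dotR, Pi.smul_apply, smul_eq_mul]; ring
  have e2 : ∀ u : Fin 2 → ℤ, ((((1:ℕ):ℤ) * EPQR p q r u : ℤ) : ℝ) + (ℓ:ℝ)⁻¹ * dotR u x
      = (ℓ:ℝ)⁻¹ * (((((ℓ:ℕ):ℤ) * EPQR p q r u : ℤ) : ℝ) + dotR u x) := by
    intro u
    push_cast
    field_simp
  constructor
  · intro h u
    rw [e u, e2 u]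
    exact mul_nonneg (inv_nonneg.mpr hl'.le) (h u)
  · intro h u
    have hu := h u
    rw [e u, e2 u] at hu
    have := mul_le_mul_of_nonneg_left hu hl'.le
    rw [mul_zero, ← mul_assoc, mul_inv_cancel₀ hc, one_mul] at this
    exact this


/-- explicit description of `Σ₁(0)` for the rank-2 form with Gram matrix
`[[p+r, −r], [−r, q+r]]`: it is the hexagon `{|x₁| ≤ q+r, |x₂| ≤ p+r, |x₁−x₂| ≤ p+q}`,
the convex hull of the six lattice points `±(q+r, p+r)`, `±(q+r, −p+r)`, `±(−q+r, p+r)`;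
it contains the standard basis vectors and is integral; consequently
`Σ_ℓ(0) = ℓ·Σ₁(0)` is integral for every positive integer `ℓ`. -/
theorem statement19
    (p q r : ℤ) (hp : 0 < p) (hq : 0 < q) (hr : 0 ≤ r) :
    (SigPQR p q r 1 =
      {x : Fin 2 → ℝ | |x 0| ≤ ((q + r : ℤ) : ℝ) ∧ |x 1| ≤ ((p + r : ℤ) : ℝ) ∧
        |x 0 - x 1| ≤ ((p + q : ℤ) : ℝ)}) ∧
    (SigPQR p q r 1 = convexHull ℝ
      {iota ![q + r, p + r], iota ![-(q + r), -(p + r)],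
       iota ![q + r, -p + r], iota ![-(q + r), p - r],
       iota ![-q + r, p + r], iota ![q - r, -(p + r)]}) ∧
    (iota ![1, 0] ∈ SigPQR p q r 1 ∧ iota ![0, 1] ∈ SigPQR p q r 1) ∧
    IsIntegral (SigPQR p q r 1) ∧
    (∀ ℓ : ℕ, 0 < ℓ →
      SigPQR p q r ℓ = (ℓ : ℝ) • SigPQR p q r 1 ∧ IsIntegral (SigPQR p q r ℓ)) := by
  refine ⟨?_, ?_, ⟨e0_mem p q r hp hq hr 1 one_pos, e1_mem p q r hp hq hr 1 one_pos⟩,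
    sig_isIntegral p q r hp hq hr 1 one_pos,
    fun ℓ hl => ⟨sig_smul p q r ℓ hl, sig_isIntegral p q r hp hq hr ℓ hl⟩⟩
  · rw [sig_eq_hex p q r hp hq hr 1]
    simp only [Nat.cast_one, one_mul]
  · rw [sig_eq_hull p q r hp hq hr 1 one_pos]
    simp only [Nat.cast_one, one_mul]

end NFC
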